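/- Let 1 ≤ i ≤ s, write ξ_i = (k,t), and let p > k be such that the elements of M in column t are exactly {(j,t) : p ≤ j ≤ n}. Then every pair (a,j) with p ≤ a ≤ n and t < j ≤ k lies in A_{i−1} = B_{i−1} ⊔ M. -/

import Mathlib

open Finset MvPolynomial

namespace Panov

/-- The set `A` of places `(i,j)` with `n ≥ i > j ≥ 1`. -/
def placesA (n : ℕ) : Finset (ℕ × ℕ) :=
  (Finset.range (n + 1) ×ˢ Finset.range (n + 1)).filter fun p => 1 ≤ p.2 ∧ p.2 < p.1

/-- The rank of a place in the linear order `≻`: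
`η ≻ ζ` iff `ordA n η < ordA n ζ`. -/
def ordA (n : ℕ) (p : ℕ × ℕ) : ℕ := p.2 * (n + 1) + (n - p.1)

/-- The `≻`-greatest element of a (nonempty) set `B` of places:
the element with the minimal value of `ordA`. -/
def xiOf (n : ℕ) (B : Finset (ℕ × ℕ)) : ℕ × ℕ :=
  let m := WithTop.untopD 0 ((B.image (ordA n)).min)
  (n - m % (n + 1), m / (n + 1))

/-- The places that get the symbol `−` at the current step, when the
current set of unfilled places is `B`. -/
def minusSet (n : ℕ) (B : Finset (ℕ × ℕ)) : Finset (ℕ × ℕ) :=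
  B.filter fun p =>
    p.1 = (xiOf n B).1 ∧ (xiOf n B).2 < p.2 ∧ p.2 < (xiOf n B).1 ∧ (p.2, (xiOf n B).2) ∈ B

/-- The places that get the symbol `+` at the current step. -/
def plusSet (n : ℕ) (B : Finset (ℕ × ℕ)) : Finset (ℕ × ℕ) :=
  B.filter fun p =>
    p.2 = (xiOf n B).2 ∧ (xiOf n B).2 < p.1 ∧ p.1 < (xiOf n B).1 ∧ ((xiOf n B).1, p.1) ∈ B

/-- `Bset n M i` is the set of places unfilled after step `i` of the diagram. -/
def Bset (n : ℕ) (M : Finset (ℕ × ℕ)) : ℕ → Finset (ℕ × ℕ)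
  | 0 => placesA n \ M
  | i + 1 =>
      Bset n M i \
        insert (xiOf n (Bset n M i)) (minusSet n (Bset n M i) ∪ plusSet n (Bset n M i))

/-- `ξ_i`, the place that receives `⊗` at step `i ≥ 1`. -/
def xiStep (n : ℕ) (M : Finset (ℕ × ℕ)) (i : ℕ) : ℕ × ℕ := xiOf n (Bset n M (i - 1))

/-- `C_i⁻`, the places filled with `−` at step `i ≥ 1`. -/
def Cminus (n : ℕ) (M : Finset (ℕ × ℕ)) (i : ℕ) : Finset (ℕ × ℕ) :=
  minusSet n (Bset n M (i - 1))

/-- `C_i⁺`, the places filled with `+` at step `i ≥ 1`. -/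
def Cplus (n : ℕ) (M : Finset (ℕ × ℕ)) (i : ℕ) : Finset (ℕ × ℕ) :=
  plusSet n (Bset n M (i - 1))

/-- `M ⊆ A` spans an ideal `𝔪` of `𝔫 = ut(n,K)`. -/
def IsIdealSet (n : ℕ) (M : Finset (ℕ × ℕ)) : Prop :=
  M ⊆ placesA n ∧
    (∀ p ∈ M, ∀ d, 1 ≤ d → d < p.2 → (p.1, d) ∈ M) ∧
    (∀ p ∈ M, ∀ c, p.1 < c → c ≤ n → (c, p.2) ∈ M)

/-- `s` is the number of steps after which the diagram is complete. -/
def IsNumSteps (n : ℕ) (M : Finset (ℕ × ℕ)) (s : ℕ) : Prop :=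
  Bset n M s = ∅ ∧ ∀ j < s, (Bset n M j).Nonempty


lemma mem_placesA {n : ℕ} {q : ℕ × ℕ} :
    q ∈ placesA n ↔ q.1 ≤ n ∧ 1 ≤ q.2 ∧ q.2 < q.1 := by
  simp only [placesA, Finset.mem_filter, Finset.mem_product, Finset.mem_range]
  omega

lemma Bset_subset_diff (n : ℕ) (M : Finset (ℕ × ℕ)) :
    ∀ l, Bset n M l ⊆ placesA n \ M
  | 0 => Finset.Subset.refl _
  | l + 1 => Finset.Subset.trans Finset.sdiff_subset (Bset_subset_diff n M l)

lemma Bset_mono (n : ℕ) (M : Finset (ℕ × ℕ)) {l m : ℕ} (h : l ≤ m) :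
    Bset n M m ⊆ Bset n M l := by
  induction m with
  | zero => simpa [Nat.le_zero.1 h] using Finset.Subset.refl _
  | succ m ih =>
      rcases Nat.lt_or_ge l (m + 1) with hl | hl
      · exact Finset.Subset.trans (Finset.sdiff_subset) (ih (by omega))
      · have : l = m + 1 := by omega
        subst this; exact Finset.Subset.refl _

lemma xiOf_spec {n : ℕ} {B : Finset (ℕ × ℕ)} (hB : B ⊆ placesA n) (hne : B.Nonempty) :
    xiOf n B ∈ B ∧ ∀ q ∈ B, ordA n (xiOf n B) ≤ ordA n q := by
  have hne' : (B.image (ordA n)).Nonempty := hne.image _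
  set m := (B.image (ordA n)).min' hne' with hm
  have hmin_eq : (B.image (ordA n)).min = (m : WithTop ℕ) := (Finset.coe_min' hne').symm
  have hmem : m ∈ B.image (ordA n) := Finset.min'_mem _ _
  obtain ⟨b, hbB, hb⟩ := Finset.mem_image.1 hmem
  have hbA := mem_placesA.1 (hB hbB)
  have hord : ordA n b = b.2 * (n + 1) + (n - b.1) := rfl
  have h1 : m % (n + 1) = n - b.1 := by
    rw [← hb, hord, Nat.mul_comm, Nat.mul_add_mod]
    exact Nat.mod_eq_of_lt (by omega)
  have h2 : m / (n + 1) = b.2 := by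
    rw [← hb, hord, Nat.mul_comm, Nat.mul_add_div (by omega), Nat.div_eq_of_lt (by omega)]
    omega
  have hxi : xiOf n B = b := by
    have hm' : WithTop.untopD 0 ((B.image (ordA n)).min) = m := by rw [hmin_eq]; rfl
    show (n - WithTop.untopD 0 ((B.image (ordA n)).min) % (n + 1),
      WithTop.untopD 0 ((B.image (ordA n)).min) / (n + 1)) = b
    rw [hm', h1, h2]
    exact Prod.ext (by omega) rfl
  refine ⟨hxi ▸ hbB, fun q hq => ?_⟩
  rw [hxi, hb]
  exact Finset.min'_le _ _ (Finset.mem_image_of_mem _ hq)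

lemma ordA_gt {n k t x y : ℕ} (h : t < y) (hk : k ≤ n) :
    ordA n (k, t) < ordA n (x, y) := by
  simp only [ordA]
  have h1 : (t + 1) * (n + 1) ≤ y * (n + 1) := Nat.mul_le_mul_right _ h
  rw [Nat.succ_mul] at h1
  omega

/-- Every pair `(a,j)` with `p ≤ a ≤ n` and `t < j ≤ k` (where `ξ_i = (k,t)` and
the elements of `M` in column `t` are exactly `{(j,t) : p ≤ j ≤ n}`) lies in
`A_{i−1} = B_{i−1} ⊔ M`. -/
theorem remark_tail_unfilled (K : Type*) [Field K] [CharZero K]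
    (n s : ℕ) (hn : 2 ≤ n) (M : Finset (ℕ × ℕ))
    (hM : IsIdealSet n M) (hs : IsNumSteps n M s)
    (i k t p : ℕ) (hi1 : 1 ≤ i) (his : i ≤ s)
    (hkt : xiStep n M i = (k, t)) (hkp : k < p)
    (hMp : ∀ j, (j, t) ∈ M ↔ p ≤ j ∧ j ≤ n) :
    ∀ a j, p ≤ a → a ≤ n → t < j → j ≤ k → (a, j) ∈ Bset n M (i - 1) ∪ M := by
  intro a j hpa han htj hjk
  have hBsub : ∀ l, (Bset n M l : Finset (ℕ × ℕ)) ⊆ placesA n :=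
    fun l q hq => (Finset.mem_sdiff.1 (Bset_subset_diff n M l hq)).1
  have hBM : ∀ l, ∀ q ∈ Bset n M l, q ∉ M :=
    fun l q hq => (Finset.mem_sdiff.1 (Bset_subset_diff n M l hq)).2
  have hine : i - 1 < s := by omega
  obtain ⟨hxmem, _⟩ := xiOf_spec (hBsub (i - 1)) (hs.2 _ hine)
  have hkt' : xiOf n (Bset n M (i - 1)) = (k, t) := hkt
  rw [hkt'] at hxmem
  have hktA := mem_placesA.1 (hBsub _ hxmem)
  have hkn : k ≤ n := hktA.1
  by_cases hMaj : (a, j) ∈ M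
  · exact Finset.mem_union_right _ hMaj
  refine Finset.mem_union_left _ ?_
  have key : ∀ l, l ≤ i - 1 → (a, j) ∈ Bset n M l := by
    intro l
    induction l with
    | zero =>
        intro _
        exact Finset.mem_sdiff.2 ⟨mem_placesA.2 ⟨han, by omega, by omega⟩, hMaj⟩
    | succ l ih =>
        intro hl
        have hajB : (a, j) ∈ Bset n M l := ih (by omega)
        have hlne : (Bset n M l).Nonempty := hs.2 l (by omega)
        obtain ⟨hξmem, hξmin⟩ := xiOf_spec (hBsub l) hlne
        set ξ := xiOf n (Bset n M l) with hξdef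
        have hktl : (k, t) ∈ Bset n M l := Bset_mono n M (by omega) hxmem
        have hmin : ordA n ξ ≤ ordA n (k, t) := hξmin _ hktl
        have hξA := mem_placesA.1 (hBsub l hξmem)
        have hξM : ξ ∉ M := hBM l ξ hξmem
        have hnot2big : ¬ t < ξ.2 := by
          intro hbig
          have := ordA_gt (x := ξ.1) hbig hkn
          rw [Prod.mk.eta] at this
          omega
        show (a, j) ∈ Bset n M l \ _
        refine Finset.mem_sdiff.2 ⟨hajB, ?_⟩
        intro hbad
        rcases Finset.mem_insert.1 hbad with heq | hbad'
        · -- (a, j) = ξ, but ordA ξ ≤ ordA (k,t) < ordA (a,j)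
          exact hnot2big (by rw [← hξdef] at heq; rw [← heq]; exact htj)
        rcases Finset.mem_union.1 hbad' with hminus | hplus
        · -- minus case: ξ = (a, t') with t' ≤ t leads to ξ ∈ M
          obtain ⟨_, h1, h2, h3, h4⟩ := Finset.mem_filter.1 hminus
          rw [← hξdef] at h1 h2 h3 h4
          have ht'le : ξ.2 ≤ t := by omega
          have hMat : (a, t) ∈ M := (hMp a).2 ⟨hpa, han⟩
          have hξeq : ξ = (a, ξ.2) := Prod.ext h1.symm rfl
          rcases Nat.lt_or_ge ξ.2 t with hlt | hge
          · exact hξM (hξeq ▸ hM.2.1 (a, t) hMat ξ.2 hξA.2.1 hlt)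
          · have : ξ.2 = t := by omega
            exact hξM (by rw [hξeq, this]; exact hMat)
        · -- plus case: ξ.2 = j > t
          obtain ⟨_, h1, _⟩ := Finset.mem_filter.1 hplus
          rw [← hξdef] at h1
          have h1' : j = ξ.2 := h1
          exact hnot2big (by omega)
  exact key _ le_rfl
end Panov
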